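/- For every pair of odd integers k_0 and k with 3 ≤ k_0 ≤ k and every positive real δ > 0, there exists an integer m and reals ω_1, …, ω_m such that Σ_{i∈[m]} ω_i^ℓ = 0 for every odd integer ℓ ≠ k_0 with 3 ≤ ℓ ≤ k, Σ_{i∈[m]} ω_i^{k_0} = 1, and Σ_{i∈[m]} ω_i^{k+1} ≤ δ. -/

import Mathlib

open MeasureTheory

/-- A kernel: a bounded measurable symmetric real function (its values on `[0,1]²` are the
relevant ones). -/
structure Kernel : Type where
  toFun : ℝ → ℝ → ℝ
  symm : ∀ x y, toFun x y = toFun y x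
  measurable : Measurable (Function.uncurry toFun)
  bounded : ∃ C : ℝ, ∀ x y, |toFun x y| ≤ C

/-- A kernel is nonzero if it is not a.e. zero on `[0,1]²`. -/
def Kernel.Nonzero (U : Kernel) : Prop :=
  ¬ (∀ᵐ p : ℝ × ℝ ∂(volume.restrict ((Set.Icc (0:ℝ) 1) ×ˢ (Set.Icc (0:ℝ) 1))),
      U.toFun p.1 p.2 = 0)

/-- A kernel is balanced if its marginals vanish a.e. -/
def Kernel.Balanced (U : Kernel) : Prop :=
  ∀ᵐ x ∂(volume.restrict (Set.Icc (0:ℝ) 1)), (∫ y in Set.Icc (0:ℝ) 1, U.toFun x y) = 0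

/-- The product of the kernel values over the edges of a graph. -/
noncomputable def edgeProd {V : Type} (H : SimpleGraph V) (U : Kernel) (x : V → ℝ) : ℝ :=
  ∏ᶠ e ∈ H.edgeSet, Sym2.lift ⟨fun u v => U.toFun (x u) (x v), fun u v => U.symm (x u) (x v)⟩ e

/-- The homomorphism density `t(H, U)` of a finite simple graph in a kernel. -/
noncomputable def homDensity {V : Type} [Fintype V] (H : SimpleGraph V) (U : Kernel) : ℝ :=
  ∫ x in (Set.univ.pi fun _ : V => Set.Icc (0:ℝ) 1), edgeProd H U x

open Classical in
/-- The rooted homomorphism density `t^H_U(z)` of a graph `H` rooted at `w`. -/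
noncomputable def rootedDensity {V : Type} [Fintype V] (H : SimpleGraph V) (w : V)
    (U : Kernel) (z : ℝ) : ℝ :=
  ∫ x in (Set.univ.pi fun _ : {v : V // v ≠ w} => Set.Icc (0:ℝ) 1),
    edgeProd H U (fun v => if h : v = w then z else x ⟨v, h⟩)

/-- A bundled finite simple graph. -/
structure FinGraph : Type 1 where
  V : Type
  fintypeV : Fintype V
  G : SimpleGraph V

attribute [instance] FinGraph.fintypeV

def FinGraph.of {V : Type} [h : Fintype V] (G : SimpleGraph V) : FinGraph := ⟨V, h, G⟩

noncomputable def FinGraph.density (G : FinGraph) (U : Kernel) : ℝ := homDensity G.G U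

/-- Number of edges of a bundled finite graph. -/
noncomputable def FinGraph.edges (G : FinGraph) : ℕ := G.G.edgeSet.ncard

instance finiteSubgraph {V : Type} [Finite V] (G : SimpleGraph V) : Finite G.Subgraph := by
  classical
  exact Finite.of_injective (fun G' => (G'.verts, G'.Adj))
    (fun a b h => SimpleGraph.Subgraph.ext (congrArg Prod.fst h) (congrArg Prod.snd h))

open Classical in
/-- The multiset of all subgraphs of `G` having exactly `l` edges. -/
noncomputable def FinGraph.subs (G : FinGraph) (l : ℕ) : Multiset FinGraph :=
  ((Set.toFinite {G' : G.G.Subgraph | G'.edgeSet.ncard = l}).toFinset.val).map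
    fun G' => FinGraph.of G'.coe

/-- `D` is an `l`-deck: a multiset of graphs each with exactly `l` edges. -/
def IsDeck (D : Multiset FinGraph) (l : ℕ) : Prop := ∀ G ∈ D, G.edges = l

/-- The `l`-deck of a deck `D`: all `l`-edge subgraphs of the graphs of `D`. -/
noncomputable def subDeck (D : Multiset FinGraph) (l : ℕ) : Multiset FinGraph :=
  D.bind fun G => G.subs l

/-- `s_D(H)`: the number of subgraphs isomorphic to `H` of the graphs in `D`. -/
noncomputable def sD (D : Multiset FinGraph) (H : FinGraph) : ℕ :=
  (D.map fun G => Set.ncard {G' : G.G.Subgraph | Nonempty (G'.coe ≃g H.G)}).sum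

/-- The coefficient `c^D_{U,l} = Σ_{G ∈ D} Σ_{H' ∈ G[l]} t(H', U)`. -/
noncomputable def coeff (D : Multiset FinGraph) (U : Kernel) (l : ℕ) : ℝ :=
  ((subDeck D l).map fun H => H.density U).sum

/-- All the coefficients `c^D_{U,2}, c^D_{U,4}, …, c^D_{U,l}` vanish. -/
def AllCoeffZero (D : Multiset FinGraph) (U : Kernel) (l : ℕ) : Prop :=
  ∀ k, Even k → 0 < k → k ≤ l → coeff D U k = 0

/-- Among `c^D_{U,2}, c^D_{U,4}, …, c^D_{U,l}` not all vanish and the first nonzero one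
is positive. -/
def FirstNonzeroPos (D : Multiset FinGraph) (U : Kernel) (l : ℕ) : Prop :=
  ∃ k, Even k ∧ 0 < k ∧ k ≤ l ∧ 0 < coeff D U k ∧
    ∀ j, Even j → 0 < j → j < k → coeff D U j = 0

/-- Among `c^D_{U,2}, c^D_{U,4}, …, c^D_{U,l}` not all vanish and the first nonzero one
is negative. -/
def FirstNonzeroNeg (D : Multiset FinGraph) (U : Kernel) (l : ℕ) : Prop :=
  ∃ k, Even k ∧ 0 < k ∧ k ≤ l ∧ coeff D U k < 0 ∧
    ∀ j, Even j → 0 < j → j < k → coeff D U j = 0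

def ClassI (D : Multiset FinGraph) (l : ℕ) : Prop :=
  ∀ U : Kernel, U.Nonzero → FirstNonzeroPos D U l

def ClassII (D : Multiset FinGraph) (l : ℕ) : Prop :=
  ∃ U : Kernel, FirstNonzeroNeg D U l

def ClassIII (D : Multiset FinGraph) (l : ℕ) : Prop :=
  (∃ U : Kernel, U.Nonzero ∧ AllCoeffZero D U l) ∧
  ∀ U : Kernel, AllCoeffZero D U l ∨ FirstNonzeroPos D U l

/-- The cycle `C_n` as a bundled graph. -/
def cycleF (n : ℕ) : FinGraph := FinGraph.of (SimpleGraph.cycleGraph n)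

/-- The path `P_n` with `n` edges as a bundled graph. -/
def pathF (n : ℕ) : FinGraph := FinGraph.of (SimpleGraph.pathGraph (n+1))

/-- Gluing two graphs by identifying the vertex `v` of `G` with the vertex `w` of `H`. -/
def glue {V W : Type} (G : SimpleGraph V) (H : SimpleGraph W) (v : V) (w : W) :
    SimpleGraph (V ⊕ {x : W // x ≠ w}) where
  Adj a b :=
    Sum.elim (fun a => Sum.elim (fun b => G.Adj a b) (fun b => a = v ∧ H.Adj w b.1) b)
             (fun a => Sum.elim (fun b => b = v ∧ H.Adj w a.1) (fun b => H.Adj a.1 b.1) b) a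
  symm := by
    constructor
    rintro (a | a) (b | b) h
    · exact h.symm
    · exact h
    · exact h
    · exact h.symm
  loopless := by
    constructor
    rintro (a | a) h
    · exact G.loopless.irrefl a h
    · exact H.loopless.irrefl a.1 h

/-- Disjoint union of two simple graphs. -/
def disjSum {V W : Type} (G : SimpleGraph V) (H : SimpleGraph W) : SimpleGraph (V ⊕ W) where
  Adj a b :=
    Sum.elim (fun a => Sum.elim (fun b => G.Adj a b) (fun _ => False) b)
             (fun a => Sum.elim (fun _ => False) (fun b => H.Adj a b) b) a
  symm := by
    constructor
    rintro (a | a) (b | b) h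
    · exact h.symm
    · exact h.elim
    · exact h.elim
    · exact h.symm
  loopless := by
    constructor
    rintro (a | a) h
    · exact G.loopless.irrefl a h
    · exact H.loopless.irrefl a h

/-- Disjoint union `G ∪ H` of bundled graphs. -/
noncomputable def FinGraph.disjU (G H : FinGraph) : FinGraph := FinGraph.of (disjSum G.G H.G)

open Classical in
/-- `C_k ⊕ P_n ⊕ C_l`: two cycles joined by a path with `n` edges; for `n = 0` this is
`C_k ⊕ C_l`, two cycles sharing one vertex. (Junk value if `k = 0` or `l = 0`.) -/
noncomputable def cpcF (k n l : ℕ) : FinGraph :=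
  if h : 0 < k ∧ 0 < l then
    let A := glue (SimpleGraph.cycleGraph k) (SimpleGraph.pathGraph (n+1)) ⟨0, h.1⟩ 0
    let ep : Fin k ⊕ {x : Fin (n+1) // x ≠ 0} :=
      if hn : n = 0 then Sum.inl ⟨0, h.1⟩
      else Sum.inr ⟨Fin.last n, fun hc => hn (by simpa using congrArg Fin.val hc)⟩
    FinGraph.of (glue A (SimpleGraph.cycleGraph l) ep ⟨0, h.2⟩)
  else FinGraph.of (⊥ : SimpleGraph (Fin 0))


/-- For every pair of odd integers `k₀`, `k` with `3 ≤ k₀ ≤ k` and every `δ > 0`,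
there exist `m` and reals `ω₁, …, ω_m` whose `ℓ`-th power sums vanish for every odd `ℓ ≠ k₀`
with `3 ≤ ℓ ≤ k`, whose `k₀`-th power sum is `1`, and whose `(k+1)`-th power sum is at
most `δ`. -/
theorem sums_of_powers_small (k₀ k : ℕ) (hk₀ : Odd k₀) (hk : Odd k)
    (h3 : 3 ≤ k₀) (hle : k₀ ≤ k) (δ : ℝ) (hδ : 0 < δ) :
    ∃ (m : ℕ) (ω : Fin m → ℝ),
      (∀ l : ℕ, Odd l → l ≠ k₀ → 3 ≤ l → l ≤ k → ∑ i, ω i ^ l = 0) ∧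
      (∑ i, ω i ^ k₀ = 1) ∧
      (∑ i, ω i ^ (k+1) ≤ δ) := by
  classical
  have hk₀0 : k₀ ≠ 0 := by omega
  set S : Finset ℕ := (Finset.range (k+1)).filter (fun l => Odd l ∧ 3 ≤ l ∧ l ≠ k₀) with hSdef
  set b : ℕ → ℝ := fun x => (2:ℝ) ^ ((x:ℝ)⁻¹) with hbdef
  set c3 : ℕ → Fin 3 → ℝ := fun x => ![1, 1, -(b x)] with hc3def
  set ω₀ : ({x // x ∈ S} → Fin 3) → ℝ := fun f => ∏ x : {x // x ∈ S}, c3 x.1 (f x) with hω₀def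
  -- basic expansion
  have key : ∀ l : ℕ, ∑ f : ({x // x ∈ S} → Fin 3), (ω₀ f) ^ l
      = ∏ x : {x // x ∈ S}, (2 + (-(b x.1)) ^ l) := by
    intro l
    have : ∀ f : ({x // x ∈ S} → Fin 3), (ω₀ f) ^ l
        = ∏ x : {x // x ∈ S}, (c3 x.1 (f x)) ^ l := by
      intro f; rw [hω₀def]; exact (Finset.prod_pow _ _ _).symm
    simp_rw [this]
    rw [show (Finset.univ : Finset ({x // x ∈ S} → Fin 3)) = Fintype.piFinset (fun _ => Finset.univ) from (Fintype.piFinset_univ).symm,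
      ← Finset.prod_univ_sum (fun _ => Finset.univ) (fun (x : {x // x ∈ S}) (j : Fin 3) => (c3 x.1 j) ^ l)]
    congr 1; funext x
    rw [hc3def]
    simp [Fin.sum_univ_three]
    ring
  -- power of b
  have hb_pow : ∀ x l : ℕ, (b x) ^ l = (2:ℝ) ^ ((x:ℝ)⁻¹ * l) := by
    intro x l
    rw [hbdef]
    rw [← Real.rpow_natCast ((2:ℝ) ^ ((x:ℝ)⁻¹)) l, ← Real.rpow_mul (by norm_num)]
  have hbpos : ∀ x : ℕ, 0 < b x := fun x => Real.rpow_pos_of_pos (by norm_num) _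
  -- membership facts about S
  have hmemS : ∀ x ∈ S, Odd x ∧ 3 ≤ x ∧ x ≠ k₀ := by
    intro x hx
    exact (Finset.mem_filter.mp hx).2
  -- the k₀ coefficient
  set c : ℝ := ∏ x : {x // x ∈ S}, (2 + (-(b x.1)) ^ k₀) with hcdef
  set P : ℝ := ∏ x : {x // x ∈ S}, (2 + (-(b x.1)) ^ (k+1)) with hPdef
  have hkeven : Even (k+1) := hk.add_one
  have hc_ne : c ≠ 0 := by
    rw [hcdef]
    apply Finset.prod_ne_zero_iff.mpr
    rintro ⟨x, hxS⟩ -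
    obtain ⟨hxo, hx3, hxne⟩ := hmemS x hxS
    have hx0 : (x:ℝ) ≠ 0 := by
      have : x ≠ 0 := by omega
      exact_mod_cast this
    show (2:ℝ) + (-(b x)) ^ k₀ ≠ 0
    rw [hk₀.neg_pow, hb_pow]
    have hne1 : ((x:ℝ))⁻¹ * (k₀:ℝ) ≠ 1 := by
      intro h
      rw [inv_mul_eq_div, div_eq_one_iff_eq hx0] at h
      exact hxne (by exact_mod_cast h.symm)
    have h2 : (2:ℝ) ^ (((x:ℝ))⁻¹ * (k₀:ℝ)) ≠ 2 ^ (1:ℝ) := by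
      intro h
      rcases lt_trichotomy (((x:ℝ))⁻¹ * (k₀:ℝ)) 1 with hlt|heq|hgt
      · exact absurd h (ne_of_lt ((Real.rpow_lt_rpow_left_iff (by norm_num)).mpr hlt))
      · exact hne1 heq
      · exact absurd h (ne_of_gt ((Real.rpow_lt_rpow_left_iff (by norm_num)).mpr hgt))
    rw [Real.rpow_one] at h2
    intro h; apply h2; linarith
  have hP_pos : 0 < P := by
    rw [hPdef]
    apply Finset.prod_pos
    rintro ⟨x, hxS⟩ -
    have : (-(b x)) ^ (k+1) = (b x) ^ (k+1) := hkeven.neg_pow _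
    rw [this]
    have := pow_pos (hbpos x) (k+1)
    linarith
  -- choice of scale
  set s₀ : ℝ := min 1 (δ * |c| / P) with hs₀def
  have hcabs : 0 < |c| := abs_pos.mpr hc_ne
  have hs₀pos : 0 < s₀ := lt_min one_pos (by positivity)
  obtain ⟨N, hN⟩ := exists_nat_ge ((s₀⁻¹) ^ k₀ / |c|)
  have hNpos : 0 < (N:ℝ) := lt_of_lt_of_le (by positivity) hN
  have hNc : 0 < (N:ℝ) * |c| := by positivity
  set s : ℝ := (((N:ℝ) * |c|)⁻¹) ^ ((k₀:ℝ)⁻¹) with hsdef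
  have hspos : 0 < s := Real.rpow_pos_of_pos (by positivity) _
  have hspow : s ^ k₀ = ((N:ℝ) * |c|)⁻¹ := by
    rw [hsdef]
    exact Real.rpow_inv_natCast_pow (by positivity) hk₀0
  have hsle : s ≤ s₀ := by
    have h1 : ((N:ℝ) * |c|)⁻¹ ≤ s₀ ^ k₀ := by
      have h2 : (s₀⁻¹) ^ k₀ ≤ (N:ℝ) * |c| := by
        rw [div_le_iff₀ hcabs] at hN; exact hN
      have h3 : ((N:ℝ) * |c|)⁻¹ ≤ ((s₀⁻¹) ^ k₀)⁻¹ := by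
        exact inv_anti₀ (by positivity) h2
      rwa [← inv_pow, inv_inv] at h3
    calc s = (((N:ℝ) * |c|)⁻¹) ^ ((k₀:ℝ)⁻¹) := hsdef
      _ ≤ (s₀ ^ k₀) ^ ((k₀:ℝ)⁻¹) := Real.rpow_le_rpow (by positivity) h1 (by positivity)
      _ = s₀ := Real.pow_rpow_inv_natCast hs₀pos.le hk₀0
  -- sign
  set ε : ℝ := if 0 < c then 1 else -1 with hεdef
  have hε2 : ε = 1 ∨ ε = -1 := by
    rw [hεdef]; split <;> simp
  have hεc : ε * c = |c| := by
    rw [hεdef]; split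
    · rw [one_mul, abs_of_pos ‹_›]
    · rw [abs_of_neg (lt_of_le_of_ne (not_lt.mp ‹_›) hc_ne)]; ring
  have hεodd : ε ^ k₀ = ε := by
    rcases hε2 with h|h <;> rw [h]
    · rw [one_pow]
    · rw [hk₀.neg_one_pow]
  have hεeven : ε ^ (k+1) = 1 := by
    rcases hε2 with h|h <;> rw [h]
    · rw [one_pow]
    · rw [hkeven.neg_one_pow]
  -- the final family
  have hsum : ∀ l : ℕ,
      ∑ i : Fin (Fintype.card (Fin N × ({x // x ∈ S} → Fin 3))),
        (ε * s * ω₀ (((Fintype.equivFin (Fin N × ({x // x ∈ S} → Fin 3))).symm i).2)) ^ l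
      = (N:ℝ) * ((ε * s) ^ l * ∏ x : {x // x ∈ S}, (2 + (-(b x.1)) ^ l)) := by
    intro l
    rw [← key l]
    rw [Equiv.sum_comp (Fintype.equivFin (Fin N × ({x // x ∈ S} → Fin 3))).symm
      (fun p => (ε * s * ω₀ p.2) ^ l)]
    rw [Fintype.sum_prod_type]
    simp only [mul_pow, ← Finset.mul_sum, Finset.sum_const, Finset.card_univ, Fintype.card_fin,
      nsmul_eq_mul]
    ring
  refine ⟨_, fun i => ε * s * ω₀ (((Fintype.equivFin (Fin N × ({x // x ∈ S} → Fin 3))).symm i).2),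
    ?_, ?_, ?_⟩
  · -- odd l ≠ k₀ in range: vanishing
    intro l hlo hlne hl3 hlk
    rw [hsum l]
    have hlS : l ∈ S := by
      rw [hSdef, Finset.mem_filter, Finset.mem_range]
      exact ⟨by omega, hlo, hl3, hlne⟩
    have hzero : (2 : ℝ) + (-(b l)) ^ l = 0 := by
      rw [hlo.neg_pow, hbdef]
      rw [Real.rpow_inv_natCast_pow (by norm_num) (by omega : l ≠ 0)]
      ring
    rw [Finset.prod_eq_zero (Finset.mem_univ (⟨l, hlS⟩ : {x // x ∈ S})) hzero]
    ring
  · -- l = k₀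
    rw [hsum k₀, ← hcdef, mul_pow, hεodd, hspow]
    have hNne : (N:ℝ) ≠ 0 := hNpos.ne'
    have hcane : |c| ≠ 0 := hcabs.ne'
    calc (N:ℝ) * (ε * ((N:ℝ) * |c|)⁻¹ * c)
        = (ε * c) * ((N:ℝ) * ((N:ℝ) * |c|)⁻¹) := by ring
      _ = |c| * ((N:ℝ) * ((N:ℝ) * |c|)⁻¹) := by rw [hεc]
      _ = 1 := by field_simp
  · -- l = k + 1
    rw [hsum (k+1), ← hPdef, mul_pow, hεeven, one_mul]
    have hd : k + 1 = k₀ + (k + 1 - k₀) := by omega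
    have hd1 : 1 ≤ k + 1 - k₀ := by omega
    have hsd : s ^ (k + 1 - k₀) ≤ s₀ := by
      calc s ^ (k + 1 - k₀) ≤ s ^ 1 :=
            pow_le_pow_of_le_one hspos.le (hsle.trans (min_le_left _ _)) hd1
        _ = s := pow_one s
        _ ≤ s₀ := hsle
    have hs₀le : s₀ ≤ δ * |c| / P := min_le_right _ _
    have hNne : (N:ℝ) ≠ 0 := hNpos.ne'
    have hcane : |c| ≠ 0 := hcabs.ne'
    calc (N:ℝ) * (s ^ (k+1) * P)
        = (N:ℝ) * ((s ^ k₀ * s ^ (k + 1 - k₀)) * P) := by rw [← pow_add, ← hd]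
      _ = (N:ℝ) * ((((N:ℝ) * |c|)⁻¹ * s ^ (k + 1 - k₀)) * P) := by rw [hspow]
      _ = |c|⁻¹ * P * s ^ (k + 1 - k₀) := by field_simp
      _ ≤ |c|⁻¹ * P * s₀ := by
          apply mul_le_mul_of_nonneg_left hsd (by positivity)
      _ ≤ |c|⁻¹ * P * (δ * |c| / P) := by
          apply mul_le_mul_of_nonneg_left hs₀le (by positivity)
      _ = δ := by field_simp
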